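/- Let (S_n)_{n≥0} be a simple symmetric random walk on ℤ started at S_0 = 1 (i.i.d. steps equal to +1 or −1 with probability 1/2 each), let T = inf{n ≥ 0 : S_n = 0} be its hitting time of 0, and let N be a random variable independent of the walk with P(N > k) = 3^{−k} for every integer k ≥ 0. Then E(min(N, T)) = 3(√2 − 1). -/

import Mathlib

section PathCount

open Finset

def stp (b : Bool) : ℤ := if b then 1 else -1

def wsum {n : ℕ} (v : Fin n → Bool) (j : ℕ) : ℤ :=
  ∑ i : Fin n, if (i : ℕ) < j then stp (v i) else 0

def cnt {n : ℕ} (v : Fin n → Bool) : ℕ := ∑ i : Fin n, if v i then 1 else 0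

def Good {n : ℕ} (v : Fin n → Bool) : Prop := ∀ j ≤ n, 0 ≤ wsum v j

instance {n : ℕ} : DecidablePred (Good (n := n)) := fun _ => Nat.decidableBallLE n _

def Dc (n t : ℕ) : ℕ := (univ.filter fun v : Fin n → Bool => Good v ∧ cnt v = t).card

def ac (n : ℕ) : ℕ := (univ.filter fun v : Fin n → Bool => Good v).card

lemma wsum_zero {n} (v : Fin n → Bool) : wsum v 0 = 0 := by simp [wsum]

lemma wsum_succ {n} (v : Fin n → Bool) (j : ℕ) (h : j < n) :
    wsum v (j + 1) = wsum v j + stp (v ⟨j, h⟩) := by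
  unfold wsum
  have : ∀ i : Fin n, (if (i : ℕ) < j + 1 then stp (v i) else 0)
      = (if (i : ℕ) < j then stp (v i) else 0) + (if i = ⟨j, h⟩ then stp (v i) else 0) := by
    intro i
    rcases lt_trichotomy (i : ℕ) j with hij | hij | hij
    · simp [hij, Nat.lt_succ_of_lt hij, show i ≠ ⟨j, h⟩ by simp [Fin.ext_iff]; omega]
    · simp [hij, show i = ⟨j, h⟩ by simp [Fin.ext_iff, hij]]
    · simp [show ¬ (i:ℕ) < j + 1 by omega, show ¬ (i:ℕ) < j by omega,
        show i ≠ ⟨j, h⟩ by simp [Fin.ext_iff]; omega]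
  rw [Finset.sum_congr rfl fun i _ => this i, Finset.sum_add_distrib]
  congr 1
  rw [Finset.sum_ite_eq' univ (⟨j, h⟩ : Fin n)]
  simp

lemma wsum_stable {n} (v : Fin n → Bool) (j : ℕ) (h : n ≤ j) : wsum v j = wsum v n := by
  unfold wsum
  refine Finset.sum_congr rfl fun i _ => ?_
  have := i.isLt
  simp [show (i:ℕ) < j by omega, i.isLt]

lemma wsum_total {n} (v : Fin n → Bool) : wsum v n = 2 * (cnt v : ℤ) - n := by
  have h1 : wsum v n = ∑ i : Fin n, stp (v i) := by
    unfold wsum; exact Finset.sum_congr rfl fun i _ => by simp [i.isLt]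
  have h2 : ∀ b, stp b = 2 * (if b then (1:ℤ) else 0) - 1 := by intro b; cases b <;> simp [stp]
  rw [h1]
  simp only [h2]
  rw [Finset.sum_sub_distrib, ← Finset.mul_sum]
  have : (cnt v : ℤ) = ∑ i : Fin n, (if v i then (1:ℤ) else 0) := by
    unfold cnt; push_cast; exact Finset.sum_congr rfl fun i _ => by cases v i <;> simp
  simp [this]

lemma wsum_snoc_le {n} (u : Fin n → Bool) (b : Bool) (j : ℕ) (h : j ≤ n) :
    wsum (Fin.snoc u b) j = wsum u j := by
  unfold wsum
  rw [Fin.sum_univ_castSucc]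
  simp only [Fin.snoc_castSucc, Fin.snoc_last, Fin.coe_castSucc, Fin.val_last]
  simp [show ¬ n < j by omega]

lemma wsum_snoc_top {n} (u : Fin n → Bool) (b : Bool) :
    wsum (Fin.snoc u b) (n + 1) = wsum u n + stp b := by
  unfold wsum
  rw [Fin.sum_univ_castSucc]
  simp only [Fin.snoc_castSucc, Fin.snoc_last, Fin.coe_castSucc, Fin.val_last]
  congr 1
  · refine Finset.sum_congr rfl fun i _ => ?_
    have := i.isLt
    simp [show (i:ℕ) < n + 1 by omega, i.isLt]
  · simp

lemma cnt_snoc {n} (u : Fin n → Bool) (b : Bool) :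
    cnt (Fin.snoc u b) = cnt u + if b then 1 else 0 := by
  unfold cnt
  rw [Fin.sum_univ_castSucc]
  simp

lemma good_snoc {n} (u : Fin n → Bool) (b : Bool) :
    Good (Fin.snoc u b) ↔ Good u ∧ 0 ≤ wsum u n + stp b := by
  constructor
  · intro h
    refine ⟨fun j hj => ?_, ?_⟩
    · have := h j (le_trans hj (Nat.le_succ n)); rwa [wsum_snoc_le u b j hj] at this
    · have := h (n+1) le_rfl; rwa [wsum_snoc_top] at this
  · rintro ⟨h1, h2⟩ j hj
    rcases Nat.lt_or_ge j (n+1) with hj' | hj'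
    · rw [wsum_snoc_le u b j (by omega)]; exact h1 j (by omega)
    · have : j = n + 1 := by omega
      subst this; rwa [wsum_snoc_top]

@[simp] lemma stp_true : stp true = 1 := rfl
@[simp] lemma stp_false : stp false = -1 := rfl

lemma cnt_snoc_true {n} (u : Fin n → Bool) : cnt (Fin.snoc u true) = cnt u + 1 := by
  rw [cnt_snoc]; simp
lemma cnt_snoc_false {n} (u : Fin n → Bool) : cnt (Fin.snoc u false) = cnt u := by
  rw [cnt_snoc]; simp

lemma card_filter_eq_sum {α : Type*} [Fintype α] (p : α → Prop) [DecidablePred p] :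
    (univ.filter p).card = ∑ x : α, if p x then 1 else 0 := by
  rw [Finset.card_filter]

lemma Dc_succ_zero (n : ℕ) : Dc (n + 1) 0 = 0 := by
  rw [Dc, Finset.card_eq_zero]
  rw [Finset.filter_eq_empty_iff]
  rintro v - ⟨hg, hc⟩
  have hall : ∀ i, v i = false := by
    intro i
    by_contra hb
    have hb' : v i = true := by cases hvi : v i <;> simp_all
    have : (1:ℕ) ≤ cnt v := by
      unfold cnt
      calc (1:ℕ) = if v i then 1 else 0 := by simp [hb']
      _ ≤ _ := Finset.single_le_sum (f := fun i => if v i then (1:ℕ) else 0)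
          (fun _ _ => by positivity) (mem_univ i)
    omega
  have h1 := hg 1 (by omega)
  rw [wsum_succ v 0 (by omega), wsum_zero, hall] at h1
  have hs : stp false = -1 := rfl
  rw [hs] at h1
  omega

lemma Dc_succ (n t : ℕ) :
    Dc (n + 1) (t + 1) = Dc n t + if n + 1 ≤ 2 * (t + 1) then Dc n (t + 1) else 0 := by
  classical
  have hsecond : (univ.filter fun u : Fin n → Bool =>
      (Good u ∧ cnt u = t + 1) ∧ n + 1 ≤ 2 * (t + 1)).card
      = if n + 1 ≤ 2 * (t + 1) then Dc n (t + 1) else 0 := by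
    by_cases h : n + 1 ≤ 2 * (t + 1)
    · rw [if_pos h, Dc]
      congr 1
      apply Finset.filter_congr
      intro u _
      simp [h]
    · rw [if_neg h, Finset.card_eq_zero, Finset.filter_eq_empty_iff]
      rintro u - hu
      exact h hu.2
  rw [Dc, card_filter_eq_sum]
  rw [← Equiv.sum_comp (Fin.snocEquiv (fun _ : Fin (n+1) => Bool))]
  have happ : ∀ (x : Bool × (Fin n → Bool)),
      (Fin.snocEquiv (fun _ : Fin (n+1) => Bool)) x = Fin.snoc x.2 x.1 := by
    intro x; rfl
  rw [Fintype.sum_prod_type]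
  rw [Fintype.sum_bool]
  have htrue : ∀ u : Fin n → Bool,
      (Good (Fin.snoc u true) ∧ cnt (Fin.snoc u true) = t + 1) ↔ (Good u ∧ cnt u = t) := by
    intro u
    rw [good_snoc, cnt_snoc_true]
    constructor
    · rintro ⟨⟨h1, _⟩, h3⟩; exact ⟨h1, by omega⟩
    · rintro ⟨h1, h2⟩
      have h0 := h1 n le_rfl
      exact ⟨⟨h1, by rw [stp_true]; omega⟩, by omega⟩
  have hfalse : ∀ u : Fin n → Bool,
      (Good (Fin.snoc u false) ∧ cnt (Fin.snoc u false) = t + 1) ↔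
        ((Good u ∧ cnt u = t + 1) ∧ n + 1 ≤ 2 * (t + 1)) := by
    intro u
    rw [good_snoc, cnt_snoc_false, stp_false]
    have hw := wsum_total u
    constructor
    · rintro ⟨⟨h1, h2⟩, h3⟩
      refine ⟨⟨h1, h3⟩, ?_⟩
      rw [hw, h3] at h2
      push_cast at h2
      omega
    · rintro ⟨⟨h1, h2⟩, h3⟩
      refine ⟨⟨h1, ?_⟩, h2⟩
      rw [hw, h2]
      push_cast
      omega
  simp only [happ]
  simp only [htrue, hfalse]
  rw [← card_filter_eq_sum, ← card_filter_eq_sum]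
  rw [hsecond]
  have hfirst : (univ.filter fun u : Fin n → Bool => Good u ∧ cnt u = t).card = Dc n t := rfl
  rw [hfirst]

lemma Dc_zero (t : ℕ) : Dc 0 t = if t = 0 then 1 else 0 := by
  have hg : ∀ v : Fin 0 → Bool, Good v := by
    intro v j hj
    interval_cases j
    rw [wsum_zero]
  have hc : ∀ v : Fin 0 → Bool, cnt v = 0 := by intro v; simp [cnt]
  rw [Dc]
  by_cases h : t = 0
  · subst h
    rw [if_pos rfl]
    rw [Finset.filter_true_of_mem (fun v _ => ⟨hg v, hc v⟩)]
    simp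
  · rw [if_neg h, Finset.card_eq_zero, Finset.filter_eq_empty_iff]
    rintro v - ⟨-, hcv⟩
    rw [hc v] at hcv
    omega

lemma Dc_formula : ∀ n t, (Dc n t : ℤ) = if n ≤ 2*t then (n.choose t : ℤ) - (n.choose (t+1) : ℤ) else 0 := by
  intro n
  induction n with
  | zero =>
    intro t
    rw [Dc_zero]
    by_cases h : t = 0
    · subst h; simp
    · rw [if_neg h, if_pos (by omega : 0 ≤ 2*t)]
      rw [Nat.choose_eq_zero_of_lt (by omega), Nat.choose_eq_zero_of_lt (by omega)]
      simp
  | succ n ih =>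
    intro t
    cases t with
    | zero =>
      rw [Dc_succ_zero, if_neg (by omega)]
      simp
    | succ s =>
      rw [Dc_succ]
      push_cast [apply_ite (Nat.cast : ℕ → ℤ)]
      rw [ih s, ih (s+1)]
      have pas1 : ((n+1).choose (s+1) : ℤ) = (n.choose s : ℤ) + (n.choose (s+1) : ℤ) := by
        exact_mod_cast congrArg (Nat.cast : ℕ → ℤ) (Nat.choose_succ_succ n s)
      have pas2 : ((n+1).choose (s+1+1) : ℤ) = (n.choose (s+1) : ℤ) + (n.choose (s+1+1) : ℤ) := by
        exact_mod_cast congrArg (Nat.cast : ℕ → ℤ) (Nat.choose_succ_succ n (s+1))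
      by_cases h1 : n + 1 ≤ 2*(s+1)
      · rw [if_pos h1, if_pos (by omega : n + 1 ≤ 2*(s+1)), if_pos (by omega : n ≤ 2*(s+1))]
        by_cases h2 : n ≤ 2*s
        · rw [if_pos h2]
          omega
        · rw [if_neg h2]
          have hn : n = 2*s+1 := by omega
          have hsym : n.choose s = n.choose (s+1) := by
            subst hn
            have := Nat.choose_symm (n := 2*s+1) (k := s+1) (by omega)
            simpa [show 2*s+1-(s+1) = s by omega] using this
          omega
      · rw [if_neg h1, if_neg (by omega : ¬ n + 1 ≤ 2*(s+1)), if_neg (by omega : ¬ n ≤ 2*s)]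
        omega

lemma cnt_le {n : ℕ} (v : Fin n → Bool) : cnt v ≤ n := by
  calc cnt v ≤ ∑ _i : Fin n, 1 := Finset.sum_le_sum (fun i _ => by split <;> omega)
  _ = n := by simp

lemma ac_eq_sum (n : ℕ) : ac n = ∑ t ∈ Finset.range (n+1), Dc n t := by
  rw [ac, Finset.card_eq_sum_card_fiberwise
    (f := cnt) (t := Finset.range (n+1))
    (fun v _ => Finset.mem_range.2 (by have := cnt_le v; omega))]
  refine Finset.sum_congr rfl fun t _ => ?_
  rw [Finset.filter_filter]
  rfl

lemma ac_formula (n : ℕ) : ac n = n.choose (n / 2) := by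
  have key : (ac n : ℤ) = (n.choose (n/2) : ℤ) := by
    rw [ac_eq_sum]
    push_cast
    rw [Finset.sum_congr rfl (fun t _ => Dc_formula n t), ← Finset.sum_filter]
    have hfil : (Finset.range (n+1)).filter (fun t => n ≤ 2*t) = Finset.Ico (n - n/2) (n+1) := by
      ext t; simp only [Finset.mem_filter, Finset.mem_range, Finset.mem_Ico]; omega
    rw [hfil, Finset.sum_Ico_eq_sum_range]
    have step : ∀ i ∈ Finset.range (n + 1 - (n - n/2)),
        ((n.choose (n - n/2 + i) : ℤ) - (n.choose (n - n/2 + i + 1) : ℤ))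
          = (fun j => (n.choose (n - n/2 + j) : ℤ)) i
            - (fun j => (n.choose (n - n/2 + j) : ℤ)) (i+1) := by
      intro i _
      have h1 : n - n/2 + i + 1 = n - n/2 + (i + 1) := by omega
      rw [h1]
    rw [Finset.sum_congr rfl step, Finset.sum_range_sub' (fun j => (n.choose (n - n/2 + j) : ℤ))]
    have e1 : n - n/2 + 0 = n - n/2 := by omega
    have e2 : n - n/2 + (n + 1 - (n - n/2)) = n + 1 := by omega
    simp only [e1, e2]
    rw [Nat.choose_eq_zero_of_lt (show n < n + 1 by omega),
      Nat.choose_symm (show n/2 ≤ n by omega)]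
    simp
  exact_mod_cast key

lemma good_iff_ne {n : ℕ} (v : Fin n → Bool) :
    (∀ j ≤ n, 1 + wsum v j ≠ 0) ↔ Good v := by
  constructor
  · intro h
    intro j
    induction j with
    | zero => intro _; rw [wsum_zero]
    | succ j ihj =>
      intro hj
      have h0 := ihj (by omega)
      have hj' : j < n := by omega
      have hstep := wsum_succ v j hj'
      have hne := h (j+1) hj
      have : stp (v ⟨j, hj'⟩) = 1 ∨ stp (v ⟨j, hj'⟩) = -1 := by
        cases v ⟨j, hj'⟩ <;> simp
      rcases this with hs | hs <;> rw [hs] at hstep <;> omega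
  · intro h j hj
    have := h j hj
    omega

end PathCount
section CentralBinom
open Finset Nat

lemma centralBinom_sq_bound : ∀ n : ℕ, (2*n+1) * (Nat.centralBinom n)^2 ≤ 16^n := by
  intro n
  induction n with
  | zero => simp [Nat.centralBinom]
  | succ n ih =>
    have hrec := Nat.succ_mul_centralBinom_succ n
    have key : (n+1)^2 * ((2*(n+1)+1) * Nat.centralBinom (n+1)^2)
        ≤ (n+1)^2 * 16^(n+1) := by
      calc (n+1)^2 * ((2*(n+1)+1) * Nat.centralBinom (n+1)^2)
          = (2*n+3) * ((n+1) * Nat.centralBinom (n+1))^2 := by ring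
        _ = (2*n+3) * (2*(2*n+1) * Nat.centralBinom n)^2 := by rw [hrec]
        _ = (4*(2*n+3)*(2*n+1)) * ((2*n+1) * Nat.centralBinom n^2) := by ring
        _ ≤ (4*(2*n+3)*(2*n+1)) * 16^n := Nat.mul_le_mul_left _ ih
        _ ≤ (16*(n+1)^2) * 16^n := Nat.mul_le_mul_right _ (by nlinarith)
        _ = (n+1)^2 * 16^(n+1) := by ring
    exact Nat.le_of_mul_le_mul_left key (by positivity)

lemma sum_reflect_pair (m : ℕ) (w : ℕ → ℕ) :
    2 * ∑ k ∈ Finset.range (m+1), w k * (Nat.centralBinom k * Nat.centralBinom (m-k))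
      = ∑ k ∈ Finset.range (m+1), (w k + w (m-k)) * (Nat.centralBinom k * Nat.centralBinom (m-k)) := by
  have h := Finset.sum_range_reflect
    (fun k => w k * (Nat.centralBinom k * Nat.centralBinom (m-k))) (m+1)
  have h' : ∑ k ∈ Finset.range (m+1), w (m-k) * (Nat.centralBinom k * Nat.centralBinom (m-k))
      = ∑ k ∈ Finset.range (m+1), w k * (Nat.centralBinom k * Nat.centralBinom (m-k)) := by
    rw [← h]
    refine Finset.sum_congr rfl fun k hk => ?_
    have hk' : k ≤ m := by simpa [Nat.lt_succ_iff] using hk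
    have e1 : m + 1 - 1 - k = m - k := by omega
    have e2 : m - (m - k) = k := by omega
    rw [e1, e2]
    ring
  rw [two_mul]
  nth_rewrite 2 [← h']
  rw [← Finset.sum_add_distrib]
  refine Finset.sum_congr rfl fun k hk => ?_
  ring

lemma cauchy_centralBinom : ∀ n : ℕ,
    ∑ k ∈ Finset.range (n+1), Nat.centralBinom k * Nat.centralBinom (n-k) = 4^n := by
  intro n
  induction n with
  | zero => simp [Nat.centralBinom]
  | succ n ih =>
    set A := ∑ k ∈ Finset.range (n+1), Nat.centralBinom k * Nat.centralBinom (n-k) with hA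
    -- S1 with weight (n+1-k) over range (n+2)
    have hS1 : ∑ k ∈ Finset.range (n+2), (n+1-k) * (Nat.centralBinom k * Nat.centralBinom (n+1-k))
        = ∑ k ∈ Finset.range (n+1), (2*(2*(n-k)+1)) * (Nat.centralBinom k * Nat.centralBinom (n-k)) := by
      rw [Finset.sum_range_succ]
      simp only [Nat.sub_self, zero_mul, add_zero]
      refine Finset.sum_congr rfl fun k hk => ?_
      have hk' : k ≤ n := by simpa [Nat.lt_succ_iff] using hk
      have e1 : n + 1 - k = (n - k) + 1 := by omega
      have hrec := Nat.succ_mul_centralBinom_succ (n - k)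
      calc (n+1-k) * (Nat.centralBinom k * Nat.centralBinom (n+1-k))
          = (((n-k)+1) * Nat.centralBinom ((n-k)+1)) * Nat.centralBinom k := by rw [e1]; ring
        _ = (2 * (2*(n-k)+1) * Nat.centralBinom (n-k)) * Nat.centralBinom k := by rw [hrec]
        _ = (2*(2*(n-k)+1)) * (Nat.centralBinom k * Nat.centralBinom (n-k)) := by ring
    -- twice S1 equals (n+1) * A(n+1)
    have h2S1 := sum_reflect_pair (n+1) (fun k => n+1-k)
    have hw1 : ∀ k ∈ Finset.range (n+2), ((n+1-k) + (n+1-(n+1-k)))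
        * (Nat.centralBinom k * Nat.centralBinom (n+1-k))
        = (n+1) * (Nat.centralBinom k * Nat.centralBinom (n+1-k)) := by
      intro k hk
      have hk' : k ≤ n+1 := by simpa [Nat.lt_succ_iff] using hk
      congr 1
      omega
    rw [Finset.sum_congr rfl hw1, ← Finset.mul_sum] at h2S1
    -- twice S2 equals (2n+2) * A
    have h2S2 := sum_reflect_pair n (fun k => 2*(n-k)+1)
    have hw2 : ∀ k ∈ Finset.range (n+1), ((2*(n-k)+1) + (2*(n-(n-k))+1))
        * (Nat.centralBinom k * Nat.centralBinom (n-k))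
        = (2*n+2) * (Nat.centralBinom k * Nat.centralBinom (n-k)) := by
      intro k hk
      have hk' : k ≤ n := by simpa [Nat.lt_succ_iff] using hk
      congr 1
      omega
    rw [Finset.sum_congr rfl hw2, ← Finset.mul_sum, ← hA] at h2S2
    -- S1 = 2 * S2
    have hS1' : ∑ k ∈ Finset.range (n+2), (n+1-k) * (Nat.centralBinom k * Nat.centralBinom (n+1-k))
        = 2 * ∑ k ∈ Finset.range (n+1), (2*(n-k)+1) * (Nat.centralBinom k * Nat.centralBinom (n-k)) := by
      rw [hS1, Finset.mul_sum]
      refine Finset.sum_congr rfl fun k hk => ?_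
      ring
    have key : (n+1) * (∑ k ∈ Finset.range (n+2), Nat.centralBinom k * Nat.centralBinom (n+1-k))
        = (n+1) * (4 * 4^n) := by
      calc (n+1) * (∑ k ∈ Finset.range (n+2), Nat.centralBinom k * Nat.centralBinom (n+1-k))
          = 2 * ∑ k ∈ Finset.range (n+2), (n+1-k) * (Nat.centralBinom k * Nat.centralBinom (n+1-k)) := by
            rw [h2S1]
        _ = 2 * (2 * ∑ k ∈ Finset.range (n+1), (2*(n-k)+1) * (Nat.centralBinom k * Nat.centralBinom (n-k))) := by
            rw [hS1']
        _ = 2 * (2 * n + 2) * A := by rw [h2S2]; ring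
        _ = (n+1) * (4 * A) := by ring
        _ = (n+1) * (4 * 4^n) := by rw [ih]
    have := Nat.eq_of_mul_eq_mul_left (show 0 < n + 1 by omega) key
    rw [this]
    ring

end CentralBinom
section RealSums
open Finset

noncomputable section

lemma choose_le_two_pow' (n k : ℕ) : n.choose k ≤ 2 ^ n := by
  rcases le_or_gt k n with h | h
  · calc n.choose k ≤ ∑ m ∈ Finset.range (n+1), n.choose m :=
        Finset.single_le_sum (f := fun m => n.choose m) (fun _ _ => Nat.zero_le _)
          (Finset.mem_range.2 (by omega))
    _ = 2 ^ n := Nat.sum_range_choose n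
  · rw [Nat.choose_eq_zero_of_lt h]; positivity

def gseq (j : ℕ) : ℝ := (Nat.centralBinom j : ℝ) * (1/36)^j

lemma gseq_nonneg (j : ℕ) : 0 ≤ gseq j := by unfold gseq; positivity

lemma gseq_le (j : ℕ) : gseq j ≤ (1/9:ℝ)^j := by
  unfold gseq
  have h : (Nat.centralBinom j : ℝ) ≤ 4^j := by
    have := choose_le_two_pow' (2*j) j
    rw [Nat.centralBinom]
    calc ((2*j).choose j : ℝ) ≤ (2:ℝ)^(2*j) := by exact_mod_cast this
      _ = 4^j := by rw [pow_mul]; norm_num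
  calc (Nat.centralBinom j : ℝ) * (1/36)^j ≤ 4^j * (1/36)^j := by
        apply mul_le_mul_of_nonneg_right h (by positivity)
    _ = (1/9:ℝ)^j := by rw [← mul_pow]; norm_num

lemma summable_gseq : Summable gseq :=
  Summable.of_nonneg_of_le gseq_nonneg gseq_le (summable_geometric_of_lt_one (by norm_num) (by norm_num))

lemma gseq_sq : (∑' j, gseq j)^2 = 9/8 := by
  rw [sq]
  rw [tsum_mul_tsum_eq_tsum_sum_antidiagonal_of_summable_norm
    (f := gseq) (g := gseq)
    (by simpa [abs_of_nonneg (gseq_nonneg _)] using summable_gseq)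
    (by simpa [abs_of_nonneg (gseq_nonneg _)] using summable_gseq)]
  have hinner : ∀ n : ℕ, ∑ kl ∈ Finset.HasAntidiagonal.antidiagonal n, gseq kl.1 * gseq kl.2 = (1/9:ℝ)^n := by
    intro n
    rw [Finset.Nat.sum_antidiagonal_eq_sum_range_succ_mk]
    have : ∀ k ∈ Finset.range (n+1), gseq k * gseq (n-k)
        = (Nat.centralBinom k * Nat.centralBinom (n-k) : ℕ) * (1/36:ℝ)^n := by
      intro k hk
      have hk' : k ≤ n := by simpa [Nat.lt_succ_iff] using hk
      unfold gseq
      push_cast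
      have hpow : (1/36:ℝ)^k * (1/36:ℝ)^(n-k) = (1/36:ℝ)^n := by
        rw [← pow_add]; congr 1; omega
      calc (Nat.centralBinom k : ℝ) * (1/36)^k * ((Nat.centralBinom (n-k) : ℝ) * (1/36)^(n-k))
          = (Nat.centralBinom k : ℝ) * (Nat.centralBinom (n-k) : ℝ) * ((1/36:ℝ)^k * (1/36:ℝ)^(n-k)) := by
            ring
        _ = (Nat.centralBinom k : ℝ) * (Nat.centralBinom (n-k) : ℝ) * (1/36:ℝ)^n := by rw [hpow]
    rw [Finset.sum_congr rfl this, ← Finset.sum_mul, ← Nat.cast_sum]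
    rw [cauchy_centralBinom n]
    push_cast
    rw [← mul_pow]
    norm_num
  rw [tsum_congr hinner, tsum_geometric_of_lt_one (by norm_num) (by norm_num)]
  norm_num

lemma gseq_tsum : ∑' j, gseq j = 3 * Real.sqrt 2 / 4 := by
  have h0 : 0 ≤ ∑' j, gseq j := tsum_nonneg gseq_nonneg
  have h1 : ∑' j, gseq j = Real.sqrt (9/8) := by
    rw [← Real.sqrt_sq h0, gseq_sq]
  rw [h1, show (9/8:ℝ) = (3/4)^2 * 2 by norm_num, Real.sqrt_mul (by positivity),
    Real.sqrt_sq (by norm_num)]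
  ring

def fseq (k : ℕ) : ℝ := (Nat.choose k (k/2) : ℝ) * (1/6)^k

lemma fseq_nonneg (k : ℕ) : 0 ≤ fseq k := by unfold fseq; positivity

lemma fseq_le (k : ℕ) : fseq k ≤ (1/3:ℝ)^k := by
  unfold fseq
  have h : (Nat.choose k (k/2) : ℝ) ≤ 2^k := by exact_mod_cast choose_le_two_pow' k (k/2)
  calc (Nat.choose k (k/2) : ℝ) * (1/6)^k ≤ 2^k * (1/6)^k := by
        apply mul_le_mul_of_nonneg_right h (by positivity)
    _ = (1/3:ℝ)^k := by rw [← mul_pow]; norm_num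

lemma summable_fseq : Summable fseq :=
  Summable.of_nonneg_of_le fseq_nonneg fseq_le (summable_geometric_of_lt_one (by norm_num) (by norm_num))

lemma fseq_even (j : ℕ) : fseq (2*j) = gseq j := by
  unfold fseq gseq
  rw [show (2*j)/2 = j by omega, pow_mul]
  norm_num [Nat.centralBinom]

lemma two_choose_odd (j : ℕ) : 2 * (2*j+1).choose j = Nat.centralBinom (j+1) := by
  have hsym : (2*j+1).choose j = (2*j+1).choose (j+1) := by
    have := Nat.choose_symm (n := 2*j+1) (k := j+1) (by omega)
    simpa [show 2*j+1-(j+1) = j by omega] using this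
  have hpas : (2*j+2).choose (j+1) = (2*j+1).choose j + (2*j+1).choose (j+1) :=
    Nat.choose_succ_succ (2*j+1) j
  rw [Nat.centralBinom, show 2*(j+1) = 2*j+2 by omega, hpas, hsym]
  omega

lemma fseq_odd (j : ℕ) : fseq (2*j+1) = 3 * gseq (j+1) := by
  unfold fseq gseq
  rw [show (2*j+1)/2 = j by omega]
  have h : ((2*j+1).choose j : ℝ) = (Nat.centralBinom (j+1) : ℝ) / 2 := by
    have := two_choose_odd j
    have : (2:ℝ) * ((2*j+1).choose j : ℝ) = (Nat.centralBinom (j+1) : ℝ) := by exact_mod_cast this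
    linarith
  have hp : (1/6:ℝ)^(2*j+1) = (1/36:ℝ)^j * (1/6) := by
    rw [pow_succ, pow_mul]; norm_num
  rw [h, hp, pow_succ]
  ring

lemma fseq_tsum : ∑' k, fseq k = 3 * (Real.sqrt 2 - 1) := by
  have hge : Summable (fun j => fseq (2*j)) := by
    simpa [fseq_even] using summable_gseq
  have hgs : Summable (fun j => gseq (j+1)) := by
    exact (summable_nat_add_iff 1).2 summable_gseq
  have hgo : Summable (fun j => fseq (2*j+1)) := by
    simp only [fseq_odd]
    exact hgs.mul_left 3
  rw [← tsum_even_add_odd hge hgo]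
  have he : ∑' j, fseq (2*j) = ∑' j, gseq j := tsum_congr fseq_even
  have ho : ∑' j, fseq (2*j+1) = 3 * ((∑' j, gseq j) - 1) := by
    rw [tsum_congr fseq_odd, tsum_mul_left]
    congr 1
    have := Summable.tsum_eq_zero_add summable_gseq
    have hg0 : gseq 0 = 1 := by norm_num [gseq, Nat.centralBinom]
    rw [this, hg0]
    ring
  rw [he, ho, gseq_tsum]
  ring

end
end RealSums

section Prob
open MeasureTheory ProbabilityTheory
open scoped ENNReal

variable {Ω : Type*} [MeasurableSpace Ω]

def Sf (X : ℕ → Ω → ℤ) (n : ℕ) (ω : Ω) : ℤ := 1 + ∑ i ∈ Finset.range n, X i ω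

def NZset (X : ℕ → Ω → ℤ) (k : ℕ) : Set Ω := {ω | ∀ j ≤ k, Sf X j ω ≠ 0}

def NoHit (X : ℕ → Ω → ℤ) : Set Ω := {ω | ∀ n, Sf X n ω ≠ 0}

def AtomSet (X : ℕ → Ω → ℤ) {k : ℕ} (v : Fin k → Bool) : Set Ω :=
  {ω | ∀ i : Fin k, X (i : ℕ) ω = stp (v i)}

variable {X : ℕ → Ω → ℤ}

lemma mSf (hX : ∀ n, Measurable (X n)) (n : ℕ) : Measurable (Sf X n) :=
  measurable_const.add (Finset.measurable_sum _ (fun i _ => hX i))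

lemma mNZ (hX : ∀ n, Measurable (X n)) (k : ℕ) : MeasurableSet (NZset X k) := by
  have : NZset X k = ⋂ (j : ℕ), ⋂ (_ : j ≤ k), {ω | Sf X j ω ≠ 0} := by
    ext ω; simp [NZset]
  rw [this]
  exact MeasurableSet.iInter fun j => MeasurableSet.iInter fun _ =>
    ((mSf hX j) (measurableSet_singleton 0)).compl

lemma mNoHit (hX : ∀ n, Measurable (X n)) : MeasurableSet (NoHit X) := by
  have : NoHit X = ⋂ (j : ℕ), {ω | Sf X j ω ≠ 0} := by ext ω; simp [NoHit]
  rw [this]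
  exact MeasurableSet.iInter fun j => ((mSf hX j) (measurableSet_singleton 0)).compl

lemma mAtom (hX : ∀ n, Measurable (X n)) {k : ℕ} (v : Fin k → Bool) :
    MeasurableSet (AtomSet X v) := by
  have : AtomSet X v = ⋂ i : Fin k, (X (i:ℕ)) ⁻¹' {stp (v i)} := by ext ω; simp [AtomSet]
  rw [this]
  exact MeasurableSet.iInter fun i => (hX _) (measurableSet_singleton _)

lemma sum_range_eq_wsum {k : ℕ} (v : Fin k → Bool) (ω : Ω) (hω : ω ∈ AtomSet X v) :
    ∀ j, j ≤ k → ∑ i ∈ Finset.range j, X i ω = wsum v j := by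
  intro j
  induction j with
  | zero => intro _; simp [wsum_zero]
  | succ j ih =>
    intro hj
    rw [Finset.sum_range_succ, ih (by omega), wsum_succ v j (by omega)]
    congr 1
    exact hω ⟨j, by omega⟩

lemma atom_nz_iff {k : ℕ} (v : Fin k → Bool) (ω : Ω) (hω : ω ∈ AtomSet X v) :
    ω ∈ NZset X k ↔ Good v := by
  rw [← good_iff_ne]
  constructor
  · intro h j hj
    have := h j hj
    rw [Sf, sum_range_eq_wsum v ω hω j hj] at this
    exact this
  · intro h j hj
    rw [Sf, sum_range_eq_wsum v ω hω j hj]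
    exact h j hj

lemma atom_disjoint {k : ℕ} {v w : Fin k → Bool} (hvw : v ≠ w) :
    Disjoint (AtomSet X v) (AtomSet X w) := by
  rw [Set.disjoint_iff_inter_eq_empty]
  ext ω
  simp only [Set.mem_inter_iff, Set.mem_empty_iff_false, iff_false]
  rintro ⟨h1, h2⟩
  apply hvw
  funext i
  have e1 := h1 i
  have e2 := h2 i
  rw [e1] at e2
  cases hv : v i <;> cases hw : w i <;> simp_all [stp]

end Prob

section Prob2
open MeasureTheory ProbabilityTheory
open scoped ENNReal

variable {Ω : Type*} [MeasurableSpace Ω] {P : Measure Ω} [IsProbabilityMeasure P]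
  {X : ℕ → Ω → ℤ} {N : Ω → ℕ}

def pat {k : ℕ} (v : Fin k → Bool) (i : ℕ) : ℤ := if h : i < k then stp (v ⟨i, h⟩) else 0

lemma atom_eq_inter {k : ℕ} (v : Fin k → Bool) :
    AtomSet X v = ⋂ i ∈ Finset.range k, (X i) ⁻¹' {pat v i} := by
  ext ω
  simp only [AtomSet, Set.mem_setOf_eq, Set.mem_iInter, Finset.mem_range, Set.mem_preimage,
    Set.mem_singleton_iff]
  constructor
  · intro h i hi
    rw [pat, dif_pos hi]
    exact h ⟨i, hi⟩
  · intro h i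
    have := h (i:ℕ) i.isLt
    rwa [pat, dif_pos i.isLt] at this

lemma meas_X_pat (hstep : ∀ n, P {ω | X n ω = 1} = 1 / 2 ∧ P {ω | X n ω = -1} = 1 / 2)
    {k : ℕ} (v : Fin k → Bool) {i : ℕ} (hi : i < k) :
    P ((X i) ⁻¹' {pat v i}) = 2⁻¹ := by
  have hpre : ∀ c : ℤ, (X i) ⁻¹' {c} = {ω | X i ω = c} := fun c => rfl
  rw [pat, dif_pos hi]
  cases h : v ⟨i, hi⟩
  · rw [stp_false, hpre, (hstep i).2, one_div]
  · rw [stp_true, hpre, (hstep i).1, one_div]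

lemma meas_atom
    (hstep : ∀ n, P {ω | X n ω = 1} = 1 / 2 ∧ P {ω | X n ω = -1} = 1 / 2)
    (hindep : iIndepFun
      (fun i : Option ℕ => i.elim (fun ω => (N ω : ℤ)) X) P)
    {k : ℕ} (v : Fin k → Bool) :
    P (AtomSet X v) = 2⁻¹ ^ k := by
  classical
  set s : Option ℕ → Set Ω := fun o =>
    o.elim ((fun ω => (N ω : ℤ)) ⁻¹' (Set.Ioi (k : ℤ))) (fun i => X i ⁻¹' {pat v i}) with hs_def
  have hs : ∀ o ∈ (Finset.range k).image some,
      MeasurableSet[MeasurableSpace.comap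
        ((fun i : Option ℕ => i.elim (fun ω => (N ω : ℤ)) X) o) inferInstance] (s o) := by
    intro o ho
    rcases Finset.mem_image.1 ho with ⟨i, _, rfl⟩
    exact ⟨{pat v i}, measurableSet_singleton _, rfl⟩
  have key := hindep.meas_biInter (S := (Finset.range k).image some) (s := s) hs
  have hset : (⋂ o ∈ (Finset.range k).image some, s o) = AtomSet X v := by
    rw [Finset.set_biInter_finset_image, atom_eq_inter]
    rfl
  have hprod : ∏ o ∈ (Finset.range k).image some, P (s o)
      = ∏ i ∈ Finset.range k, P ((X i) ⁻¹' {pat v i}) := by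
    rw [Finset.prod_image (fun a _ b _ h => Option.some_injective _ h)]
    rfl
  rw [hset, hprod] at key
  rw [key, Finset.prod_congr rfl (fun i hi => meas_X_pat hstep v (Finset.mem_range.1 hi))]
  simp

lemma meas_atom_inter_N
    (hstep : ∀ n, P {ω | X n ω = 1} = 1 / 2 ∧ P {ω | X n ω = -1} = 1 / 2)
    (hindep : iIndepFun
      (fun i : Option ℕ => i.elim (fun ω => (N ω : ℤ)) X) P)
    (hNlaw : ∀ k : ℕ, P {ω | k < N ω} = (3 : ℝ≥0∞)⁻¹ ^ k)
    {k : ℕ} (v : Fin k → Bool) :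
    P ({ω | k < N ω} ∩ AtomSet X v) = 3⁻¹ ^ k * 2⁻¹ ^ k := by
  classical
  set s : Option ℕ → Set Ω := fun o =>
    o.elim ((fun ω => (N ω : ℤ)) ⁻¹' (Set.Ioi (k : ℤ))) (fun i => X i ⁻¹' {pat v i}) with hs_def
  have hnone : s none = {ω | k < N ω} := by
    ext ω
    simp only [hs_def, Option.elim, Set.mem_preimage, Set.mem_Ioi, Set.mem_setOf_eq]
    exact_mod_cast Iff.rfl
  have hs : ∀ o ∈ insert none ((Finset.range k).image some),
      MeasurableSet[MeasurableSpace.comap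
        ((fun i : Option ℕ => i.elim (fun ω => (N ω : ℤ)) X) o) inferInstance] (s o) := by
    intro o ho
    rcases Finset.mem_insert.1 ho with rfl | ho
    · exact ⟨Set.Ioi (k : ℤ), measurableSet_Ioi, rfl⟩
    · rcases Finset.mem_image.1 ho with ⟨i, _, rfl⟩
      exact ⟨{pat v i}, measurableSet_singleton _, rfl⟩
  have hnotmem : (none : Option ℕ) ∉ (Finset.range k).image some := by
    simp
  have key := hindep.meas_biInter (S := insert none ((Finset.range k).image some)) (s := s) hs
  have hset : (⋂ o ∈ insert none ((Finset.range k).image some), s o)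
      = {ω | k < N ω} ∩ AtomSet X v := by
    rw [Finset.set_biInter_insert, Finset.set_biInter_finset_image, atom_eq_inter, hnone]
    rfl
  have hprod : ∏ o ∈ insert none ((Finset.range k).image some), P (s o)
      = P (s none) * ∏ i ∈ Finset.range k, P ((X i) ⁻¹' {pat v i}) := by
    rw [Finset.prod_insert hnotmem,
      Finset.prod_image (fun a _ b _ h => Option.some_injective _ h)]
    rfl
  rw [hset, hprod, hnone, hNlaw k] at key
  rw [key, Finset.prod_congr rfl (fun i hi => meas_X_pat hstep v (Finset.mem_range.1 hi))]
  simp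

end Prob2

section Prob3
open MeasureTheory ProbabilityTheory
open scoped ENNReal

variable {Ω : Type*} [MeasurableSpace Ω] {P : Measure Ω} [IsProbabilityMeasure P]
  {X : ℕ → Ω → ℤ} {N : Ω → ℕ}

def BadSet (X : ℕ → Ω → ℤ) (k : ℕ) : Set Ω := {ω | ∃ i, i < k ∧ X i ω ≠ 1 ∧ X i ω ≠ -1}

def Gset (k : ℕ) : Finset (Fin k → Bool) := Finset.univ.filter Good

lemma meas_bad (hX : ∀ n, Measurable (X n))
    (hstep : ∀ n, P {ω | X n ω = 1} = 1 / 2 ∧ P {ω | X n ω = -1} = 1 / 2) (k : ℕ) :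
    P (BadSet X k) = 0 := by
  have h1 : ∀ i : ℕ, P {ω | X i ω ≠ 1 ∧ X i ω ≠ -1} = 0 := by
    intro i
    have hm1 : MeasurableSet {ω | X i ω = 1} := (hX i) (measurableSet_singleton 1)
    have hm2 : MeasurableSet {ω | X i ω = -1} := (hX i) (measurableSet_singleton (-1))
    have hd : Disjoint {ω | X i ω = 1} {ω | X i ω = -1} := by
      rw [Set.disjoint_left]
      intro ω ha hb
      simp only [Set.mem_setOf_eq] at ha hb
      rw [ha] at hb
      norm_num at hb
    have hu : P ({ω | X i ω = 1} ∪ {ω | X i ω = -1}) = 1 := by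
      rw [measure_union hd hm2, (hstep i).1, (hstep i).2]
      rw [ENNReal.div_add_div_same, one_add_one_eq_two]
      exact ENNReal.div_self (by norm_num) (by norm_num)
    have heq : {ω | X i ω ≠ 1 ∧ X i ω ≠ -1} = ({ω | X i ω = 1} ∪ {ω | X i ω = -1})ᶜ := by
      ext ω
      simp [not_or]
    rw [heq, measure_compl (hm1.union hm2) (measure_ne_top P _), hu, measure_univ]
    simp
  have hBeq : BadSet X k = ⋃ i ∈ Finset.range k, {ω | X i ω ≠ 1 ∧ X i ω ≠ -1} := by
    ext ω
    simp only [BadSet, Set.mem_setOf_eq, Set.mem_iUnion, Finset.mem_range, exists_prop]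
    try tauto
  rw [hBeq]
  refine le_antisymm ?_ (zero_le)
  calc P (⋃ i ∈ Finset.range k, {ω | X i ω ≠ 1 ∧ X i ω ≠ -1})
      ≤ ∑ i ∈ Finset.range k, P {ω | X i ω ≠ 1 ∧ X i ω ≠ -1} := measure_biUnion_finset_le _ _
    _ = 0 := by simp [h1]

lemma mem_good_atom {k : ℕ} {ω : Ω} (hb : ω ∉ BadSet X k) (hNZ : ω ∈ NZset X k) :
    ∃ v ∈ Gset k, ω ∈ AtomSet X v := by
  have hv : ∀ i : Fin k, X (i:ℕ) ω = 1 ∨ X (i:ℕ) ω = -1 := by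
    intro i
    by_contra h
    push_neg at h
    exact hb ⟨(i:ℕ), i.isLt, h.1, h.2⟩
  set v : Fin k → Bool := fun i => decide (X (i:ℕ) ω = 1) with hvdef
  have hatom : ω ∈ AtomSet X v := by
    intro i
    rcases hv i with h | h
    · simp [hvdef, h, stp]
    · have hne : ¬ X (i:ℕ) ω = 1 := by rw [h]; norm_num
      simp [hvdef, h, hne, stp]
  refine ⟨v, ?_, hatom⟩
  simp only [Gset, Finset.mem_filter, Finset.mem_univ, true_and]
  exact (atom_nz_iff v ω hatom).1 hNZ

lemma nz_subset (k : ℕ) :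
    NZset X k ⊆ BadSet X k ∪ ⋃ v ∈ Gset k, AtomSet X v := by
  intro ω hω
  by_cases hb : ω ∈ BadSet X k
  · exact Or.inl hb
  · obtain ⟨v, hvG, hatom⟩ := mem_good_atom hb hω
    exact Or.inr (Set.mem_biUnion hvG hatom)

lemma card_Gset (k : ℕ) : (Gset k).card = ac k := rfl

lemma meas_nz_inter_N (hX : ∀ n, Measurable (X n))
    (hstep : ∀ n, P {ω | X n ω = 1} = 1 / 2 ∧ P {ω | X n ω = -1} = 1 / 2)
    (hindep : iIndepFun
      (fun i : Option ℕ => i.elim (fun ω => (N ω : ℤ)) X) P)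
    (hN : Measurable N)
    (hNlaw : ∀ k : ℕ, P {ω | k < N ω} = (3 : ℝ≥0∞)⁻¹ ^ k)
    (k : ℕ) :
    P ({ω | k < N ω} ∩ NZset X k) = (ac k : ℝ≥0∞) * (3⁻¹ ^ k * 2⁻¹ ^ k) := by
  classical
  have hEmeas : MeasurableSet {ω | k < N ω} := by
    have : {ω | k < N ω} = N ⁻¹' (Set.Ioi k) := rfl
    rw [this]
    exact hN ((Set.Ioi k).to_countable.measurableSet)
  have hEU : ({ω | k < N ω} ∩ NZset X k) \ BadSet X k
      = (⋃ v ∈ Gset k, ({ω | k < N ω} ∩ AtomSet X v)) \ BadSet X k := by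
    ext ω
    constructor
    · rintro ⟨⟨hE, hNZ⟩, hb⟩
      obtain ⟨v, hvG, hatom⟩ := mem_good_atom hb hNZ
      exact ⟨Set.mem_biUnion hvG ⟨hE, hatom⟩, hb⟩
    · rintro ⟨hU, hb⟩
      rw [Set.mem_iUnion₂] at hU
      obtain ⟨v, hvG, hE, hatom⟩ := hU
      refine ⟨⟨hE, ?_⟩, hb⟩
      apply (atom_nz_iff v ω hatom).2
      simpa [Gset] using hvG
  have hbad := meas_bad (P := P) hX hstep k
  calc P ({ω | k < N ω} ∩ NZset X k)
      = P (({ω | k < N ω} ∩ NZset X k) \ BadSet X k) := (measure_diff_null hbad).symm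
    _ = P ((⋃ v ∈ Gset k, ({ω | k < N ω} ∩ AtomSet X v)) \ BadSet X k) := by rw [hEU]
    _ = P (⋃ v ∈ Gset k, ({ω | k < N ω} ∩ AtomSet X v)) := measure_diff_null hbad
    _ = ∑ v ∈ Gset k, P ({ω | k < N ω} ∩ AtomSet X v) := by
        refine measure_biUnion_finset ?_ (fun v _ => hEmeas.inter (mAtom hX v))
        intro v _ w _ hvw
        exact (atom_disjoint hvw).mono Set.inter_subset_right Set.inter_subset_right
    _ = ∑ _v ∈ Gset k, (3⁻¹ ^ k * 2⁻¹ ^ k : ℝ≥0∞) := by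
        exact Finset.sum_congr rfl fun v _ => meas_atom_inter_N hstep hindep hNlaw v
    _ = (ac k : ℝ≥0∞) * (3⁻¹ ^ k * 2⁻¹ ^ k) := by
        rw [Finset.sum_const, card_Gset]
        simp [nsmul_eq_mul]

lemma meas_nz_le (hX : ∀ n, Measurable (X n))
    (hstep : ∀ n, P {ω | X n ω = 1} = 1 / 2 ∧ P {ω | X n ω = -1} = 1 / 2)
    (hindep : iIndepFun
      (fun i : Option ℕ => i.elim (fun ω => (N ω : ℤ)) X) P)
    (k : ℕ) :
    P (NZset X k) ≤ (ac k : ℝ≥0∞) * 2⁻¹ ^ k := by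
  calc P (NZset X k) ≤ P (BadSet X k ∪ ⋃ v ∈ Gset k, AtomSet X v) :=
        measure_mono (nz_subset k)
    _ ≤ P (BadSet X k) + P (⋃ v ∈ Gset k, AtomSet X v) := measure_union_le _ _
    _ = P (⋃ v ∈ Gset k, AtomSet X v) := by rw [meas_bad hX hstep k, zero_add]
    _ ≤ ∑ v ∈ Gset k, P (AtomSet X v) := measure_biUnion_finset_le _ _
    _ = ∑ _v ∈ Gset k, (2⁻¹ ^ k : ℝ≥0∞) :=
        Finset.sum_congr rfl fun v _ => meas_atom hstep hindep v
    _ = (ac k : ℝ≥0∞) * 2⁻¹ ^ k := by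
        rw [Finset.sum_const, card_Gset]
        simp [nsmul_eq_mul]

lemma meas_nohit (hX : ∀ n, Measurable (X n))
    (hstep : ∀ n, P {ω | X n ω = 1} = 1 / 2 ∧ P {ω | X n ω = -1} = 1 / 2)
    (hindep : iIndepFun
      (fun i : Option ℕ => i.elim (fun ω => (N ω : ℤ)) X) P) :
    P (NoHit X) = 0 := by
  set x := P (NoHit X) with hx
  have hle : ∀ j : ℕ, x ≤ (Nat.centralBinom j : ℝ≥0∞) * 2⁻¹ ^ (2*j) := by
    intro j
    have hsub : NoHit X ⊆ NZset X (2*j) := by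
      intro ω hω j' _
      exact hω j'
    have hac : ac (2*j) = Nat.centralBinom j := by
      rw [ac_formula, Nat.centralBinom]
      congr 1
      omega
    calc x ≤ P (NZset X (2*j)) := measure_mono hsub
      _ ≤ (ac (2*j) : ℝ≥0∞) * 2⁻¹ ^ (2*j) := meas_nz_le hX hstep hindep (2*j)
      _ = (Nat.centralBinom j : ℝ≥0∞) * 2⁻¹ ^ (2*j) := by rw [hac]
  have hsq : ∀ j : ℕ, ((2*j+1 : ℕ) : ℝ≥0∞) * x^2 ≤ 1 := by
    intro j
    have h1 : x^2 ≤ ((Nat.centralBinom j : ℝ≥0∞) * 2⁻¹ ^ (2*j))^2 := pow_le_pow_left' (hle j) 2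
    have hcast : (((2*j+1) * (Nat.centralBinom j)^2 : ℕ) : ℝ≥0∞) ≤ ((16^j : ℕ) : ℝ≥0∞) :=
      Nat.cast_le.2 (centralBinom_sq_bound j)
    calc ((2*j+1 : ℕ) : ℝ≥0∞) * x^2
        ≤ ((2*j+1 : ℕ) : ℝ≥0∞) * ((Nat.centralBinom j : ℝ≥0∞) * 2⁻¹ ^ (2*j))^2 :=
          mul_le_mul_right h1 _
      _ = (((2*j+1) * (Nat.centralBinom j)^2 : ℕ) : ℝ≥0∞) * (2⁻¹ ^ (2*j))^2 := by
          push_cast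
          ring
      _ ≤ ((16^j : ℕ) : ℝ≥0∞) * (2⁻¹ ^ (2*j))^2 := mul_le_mul_left hcast _
      _ = ((16^j : ℕ) : ℝ≥0∞) * (16⁻¹)^j := by
          congr 1
          calc ((2:ℝ≥0∞)⁻¹ ^ (2*j))^2 = 2⁻¹ ^ (2*j*2) := by rw [← pow_mul]
            _ = (2⁻¹^4)^j := by rw [← pow_mul]; congr 1; omega
            _ = ((16:ℝ≥0∞)⁻¹)^j := by congr 1; rw [← ENNReal.inv_pow]; norm_num
      _ = (16:ℝ≥0∞)^j * (16⁻¹)^j := by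
          congr 1
          push_cast
          ring
      _ = 1 := by
          rw [← mul_pow, ENNReal.mul_inv_cancel (by norm_num) (by norm_num), one_pow]
  have hx2 : x^2 = 0 := by
    by_contra h
    obtain ⟨n, hn⟩ := ENNReal.exists_inv_nat_lt h
    have hmono : ((2*n+1 : ℕ) : ℝ≥0∞)⁻¹ ≤ ((n : ℕ) : ℝ≥0∞)⁻¹ := by
      apply ENNReal.inv_le_inv'
      exact_mod_cast Nat.le_of_lt_succ (by omega)
    have h1 : ((2*n+1 : ℕ) : ℝ≥0∞)⁻¹ < x^2 := lt_of_le_of_lt hmono hn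
    have h2 := hsq n
    have hne : ((2*n+1 : ℕ) : ℝ≥0∞) ≠ 0 := by exact_mod_cast (by omega : (2*n+1) ≠ 0)
    have hnetop : ((2*n+1 : ℕ) : ℝ≥0∞) ≠ ⊤ := ENNReal.natCast_ne_top _
    have : (1:ℝ≥0∞) < ((2*n+1 : ℕ) : ℝ≥0∞) * x^2 := by
      calc (1:ℝ≥0∞) = ((2*n+1 : ℕ) : ℝ≥0∞) * ((2*n+1 : ℕ) : ℝ≥0∞)⁻¹ :=
            (ENNReal.mul_inv_cancel hne hnetop).symm
        _ < ((2*n+1 : ℕ) : ℝ≥0∞) * x^2 := (ENNReal.mul_lt_mul_iff_right hne hnetop).2 h1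
    exact absurd h2 (not_le.2 this)
  exact (pow_eq_zero_iff (two_ne_zero)).1 hx2

end Prob3

section Prob4
open MeasureTheory ProbabilityTheory
open scoped ENNReal

variable {Ω : Type*} [MeasurableSpace Ω] {P : Measure Ω} [IsProbabilityMeasure P]
  {X : ℕ → Ω → ℤ} {N : Ω → ℕ}

lemma lt_T_iff (k : ℕ) (ω : Ω) :
    k < sInf {n | Sf X n ω = 0} ↔ (ω ∈ NZset X k ∧ ω ∉ NoHit X) := by
  constructor
  · intro h
    have hne : {n | Sf X n ω = 0}.Nonempty := by
      by_contra hc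
      rw [Set.not_nonempty_iff_eq_empty] at hc
      rw [hc, Nat.sInf_empty] at h
      omega
    obtain ⟨n0, hn0⟩ := hne
    refine ⟨?_, fun hnh => hnh n0 hn0⟩
    intro j hj hSj
    have := Nat.sInf_le (show j ∈ {n | Sf X n ω = 0} from hSj)
    omega
  · rintro ⟨hNZ, hnh⟩
    simp only [NoHit, Set.mem_setOf_eq, not_forall, not_not] at hnh
    obtain ⟨n0, hn0⟩ := hnh
    have hmem : sInf {n | Sf X n ω = 0} ∈ {n | Sf X n ω = 0} := Nat.sInf_mem ⟨n0, hn0⟩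
    by_contra h
    push_neg at h
    exact hNZ _ h hmem

lemma lt_T_set_eq (k : ℕ) :
    {ω | k < sInf {n | Sf X n ω = 0}} = NZset X k ∩ (NoHit X)ᶜ := by
  ext ω
  simpa using lt_T_iff k ω

lemma mT (hX : ∀ n, Measurable (X n)) :
    Measurable (fun ω => sInf {n | Sf X n ω = 0}) := by
  apply measurable_to_countable'
  have hset : ∀ k : ℕ, MeasurableSet {ω | k < sInf {n | Sf X n ω = 0}} := by
    intro k
    rw [lt_T_set_eq]
    exact (mNZ hX k).inter (mNoHit hX).compl
  intro n
  cases n with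
  | zero =>
    have : (fun ω => sInf {n | Sf X n ω = 0}) ⁻¹' {0}
        = {ω | 0 < sInf {n | Sf X n ω = 0}}ᶜ := by
      ext ω
      simp only [Set.mem_preimage, Set.mem_singleton_iff, Set.mem_compl_iff, Set.mem_setOf_eq]
      omega
    rw [this]
    exact (hset 0).compl
  | succ m =>
    have : (fun ω => sInf {n | Sf X n ω = 0}) ⁻¹' {m+1}
        = {ω | m < sInf {n | Sf X n ω = 0}} \ {ω | m+1 < sInf {n | Sf X n ω = 0}} := by
      ext ω
      simp only [Set.mem_preimage, Set.mem_singleton_iff, Set.mem_diff, Set.mem_setOf_eq]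
      omega
    rw [this]
    exact (hset m).diff (hset (m+1))

lemma measSetNat (s : Set ℕ) : MeasurableSet s := s.to_countable.measurableSet

lemma mM (hX : ∀ n, Measurable (X n)) (hN : Measurable N) :
    Measurable (fun ω => min (N ω) (sInf {n | Sf X n ω = 0})) := by
  apply measurable_to_countable'
  intro n
  have h1 : MeasurableSet {ω | N ω = n} := hN (measSetNat {m | m = n})
  have h2 : MeasurableSet {ω | n ≤ N ω} := hN (measSetNat {m | n ≤ m})
  have h3 : MeasurableSet {ω | sInf {n | Sf X n ω = 0} = n} := mT hX (measSetNat {m | m = n})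
  have h4 : MeasurableSet {ω | n ≤ sInf {n | Sf X n ω = 0}} := mT hX (measSetNat {m | n ≤ m})
  have : (fun ω => min (N ω) (sInf {n | Sf X n ω = 0})) ⁻¹' {n}
      = ({ω | N ω = n} ∩ {ω | n ≤ sInf {n | Sf X n ω = 0}})
        ∪ ({ω | sInf {n | Sf X n ω = 0} = n} ∩ {ω | n ≤ N ω}) := by
    ext ω
    simp only [Set.mem_preimage, Set.mem_singleton_iff, Set.mem_union, Set.mem_inter_iff,
      Set.mem_setOf_eq]
    omega
  rw [this]
  exact (h1.inter h4).union (h3.inter h2)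

lemma lintegral_nat_eq_tsum {f : Ω → ℕ} (hf : ∀ k : ℕ, MeasurableSet {ω | k < f ω}) :
    ∫⁻ ω, (f ω : ℝ≥0∞) ∂P = ∑' k : ℕ, P {ω | k < f ω} := by
  have hpt : ∀ ω, ((f ω : ℝ≥0∞))
      = ∑' k : ℕ, Set.indicator {ω | k < f ω} (fun _ => (1:ℝ≥0∞)) ω := by
    intro ω
    have h1 : ∀ k : ℕ, Set.indicator {ω | k < f ω} (fun _ => (1:ℝ≥0∞)) ω
        = if k < f ω then 1 else 0 := by
      intro k
      by_cases h : k < f ω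
      · rw [if_pos h]
        have h' : ω ∈ {ω' | k < f ω'} := h
        exact Set.indicator_of_mem h' _
      · rw [if_neg h]
        have h' : ω ∉ {ω' | k < f ω'} := h
        exact Set.indicator_of_notMem h' _
    rw [tsum_congr h1]
    rw [tsum_eq_sum (s := Finset.range (f ω)) (fun k hk => by
      rw [if_neg]
      simpa using hk)]
    rw [Finset.sum_congr rfl (fun k hk => if_pos (Finset.mem_range.1 hk))]
    simp
  rw [lintegral_congr hpt]
  rw [lintegral_tsum (fun k => (measurable_const.indicator (hf k)).aemeasurable)]
  refine tsum_congr fun k => ?_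
  rw [lintegral_indicator_const (hf k)]
  rw [one_mul]

end Prob4

open MeasureTheory ProbabilityTheory
open scoped ENNReal

/-- Let `(S_n)` be a simple symmetric random walk on `ℤ` started at
`S_0 = 1` (i.i.d. `±1` steps with probability `1/2` each), let
`T = inf {n ≥ 0 : S_n = 0}` be its hitting time of `0`, and let `N` be a random
variable, independent of the walk, with `P(N > k) = 3^{-k}` for every `k ≥ 0`.  Then
`E(min(N, T)) = 3(√2 - 1)`.

Independence of `N` from the walk and the i.i.d. property of the steps are packaged as
the joint independence of the family indexed by `Option ℕ` sending `none` to `N` and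
`some n` to the `n`-th step `X n`. -/
theorem expected_min_geometric_hitting_time
    {Ω : Type*} [MeasurableSpace Ω] (P : Measure Ω) [IsProbabilityMeasure P]
    (X : ℕ → Ω → ℤ) (N : Ω → ℕ)
    (hX : ∀ n, Measurable (X n)) (hN : Measurable N)
    (hstep : ∀ n, P {ω | X n ω = 1} = 1 / 2 ∧ P {ω | X n ω = -1} = 1 / 2)
    (hindep : iIndepFun
      (fun i : Option ℕ => i.elim (fun ω => (N ω : ℤ)) X) P)
    (hNlaw : ∀ k : ℕ, P {ω | k < N ω} = (3 : ℝ≥0∞)⁻¹ ^ k) :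
    ∫ ω, ((min (N ω) (sInf {n : ℕ | 1 + ∑ i ∈ Finset.range n, X i ω = 0}) : ℕ) : ℝ) ∂P
      = 3 * (Real.sqrt 2 - 1) := by
  have key : ∫ ω, ((min (N ω) (sInf {n : ℕ | Sf X n ω = 0}) : ℕ) : ℝ) ∂P
      = 3 * (Real.sqrt 2 - 1) := by
    set M : Ω → ℕ := fun ω => min (N ω) (sInf {n | Sf X n ω = 0}) with hM
    have hMmeas : Measurable M := mM hX hN
    have hevmeas : ∀ k : ℕ, MeasurableSet {ω | k < M ω} :=
      fun k => hMmeas (measSetNat {m | k < m})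
    have hev : ∀ k : ℕ, P {ω | k < M ω} = (ac k : ℝ≥0∞) * (3⁻¹ ^ k * 2⁻¹ ^ k) := by
      intro k
      have h1 : {ω | k < M ω} = ({ω | k < N ω} ∩ NZset X k) \ NoHit X := by
        ext ω
        simp only [hM, Set.mem_setOf_eq, lt_min_iff, Set.mem_diff, Set.mem_inter_iff]
        constructor
        · rintro ⟨hkN, hkT⟩
          have h2 := (lt_T_iff k ω).1 hkT
          exact ⟨⟨hkN, h2.1⟩, h2.2⟩
        · rintro ⟨⟨hkN, hNZ⟩, hnh⟩
          exact ⟨hkN, (lt_T_iff k ω).2 ⟨hNZ, hnh⟩⟩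
      rw [h1, measure_diff_null (meas_nohit hX hstep hindep),
        meas_nz_inter_N hX hstep hindep hN hNlaw k]
    have hnonneg : 0 ≤ᵐ[P] fun ω => ((M ω : ℕ) : ℝ) :=
      Filter.Eventually.of_forall (fun ω => by positivity)
    have hcastmeas : Measurable (fun n : ℕ => (n : ℝ)) := measurable_from_top
    have hmeasR : AEStronglyMeasurable (fun ω => ((M ω : ℕ) : ℝ)) P :=
      (hcastmeas.comp hMmeas).aestronglyMeasurable
    rw [integral_eq_lintegral_of_nonneg_ae hnonneg hmeasR]
    have hof : ∀ ω, ENNReal.ofReal ((M ω : ℕ) : ℝ) = ((M ω : ℕ) : ℝ≥0∞) :=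
      fun ω => ENNReal.ofReal_natCast _
    rw [lintegral_congr hof, lintegral_nat_eq_tsum hevmeas, tsum_congr hev]
    have hterm : ∀ k : ℕ, (ac k : ℝ≥0∞) * (3⁻¹ ^ k * 2⁻¹ ^ k) = ENNReal.ofReal (fseq k) := by
      intro k
      have hchoose : (ac k : ℝ≥0∞) = ENNReal.ofReal ((Nat.choose k (k/2) : ℝ)) := by
        rw [ENNReal.ofReal_natCast, ac_formula]
      have hpow : (3:ℝ≥0∞)⁻¹ ^ k * 2⁻¹ ^ k = ENNReal.ofReal ((1/6:ℝ)^k) := by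
        rw [← mul_pow, ENNReal.ofReal_pow (by norm_num)]
        congr 1
        rw [show (1/6:ℝ) = (6:ℝ)⁻¹ by norm_num, ENNReal.ofReal_inv_of_pos (by norm_num)]
        rw [show ENNReal.ofReal (6:ℝ) = (6:ℝ≥0∞) from by
          rw [show (6:ℝ) = ((6:ℕ):ℝ) by norm_num, ENNReal.ofReal_natCast]
          norm_num]
        rw [← ENNReal.mul_inv (Or.inl (by norm_num)) (Or.inl (by norm_num))]
        norm_num
      calc (ac k : ℝ≥0∞) * (3⁻¹ ^ k * 2⁻¹ ^ k)
          = ENNReal.ofReal ((Nat.choose k (k/2) : ℝ)) * ENNReal.ofReal ((1/6:ℝ)^k) := by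
            rw [hchoose, hpow]
        _ = ENNReal.ofReal ((Nat.choose k (k/2) : ℝ) * (1/6)^k) :=
            (ENNReal.ofReal_mul (by positivity)).symm
        _ = ENNReal.ofReal (fseq k) := rfl
    rw [tsum_congr hterm, ← ENNReal.ofReal_tsum_of_nonneg fseq_nonneg summable_fseq, fseq_tsum]
    rw [ENNReal.toReal_ofReal ?_]
    have h2 : (1:ℝ) ≤ Real.sqrt 2 := by
      nlinarith [Real.sq_sqrt (show (0:ℝ) ≤ 2 by norm_num), Real.sqrt_nonneg 2]
    nlinarith
  exact key
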